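/- Let A be a finite polynomial automaton of degree ≤ m (the maximal number of nontrivial simple directed cycles connected by a directed path is at most m+1). Then the number of directed paths of length n in A avoiding the trivial state is bounded by a polynomial in n of degree ≤ m. -/

import Mathlib

/-- A finite invertible automaton over the alphabet `X`. -/
structure Automaton (X : Type*) where
  S : Type*
  [fin : Fintype S]
  trans : S → X → S
  out : S → X → X
  inv : ∀ s : S, Function.Bijective (out s)

attribute [instance] Automaton.fin

namespace Automaton

variable {X : Type*} (A : Automaton X)

/-- A simple directed cycle in (the Moore diagram of) the automaton `A`. -/
def IsCycle (c : List (A.S × X)) : Prop :=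
  c ≠ [] ∧ (c.map Prod.fst).Nodup ∧
    c.Chain' (fun p q => A.trans p.1 p.2 = q.1) ∧
    ∀ h : c ≠ [], A.trans (c.getLast h).1 (c.getLast h).2 = (c.head h).1

/-- The edge relation of the underlying directed graph of `A`. -/
def Edge (s t : A.S) : Prop := ∃ x : X, A.trans s x = t

/-- There is a directed path from (a state of) the cycle `c₁` to (a state of) `c₂`. -/
def ConnectedTo (c₁ c₂ : List (A.S × X)) : Prop :=
  ∃ s t : A.S, s ∈ c₁.map Prod.fst ∧ t ∈ c₂.map Prod.fst ∧
    Relation.ReflTransGen A.Edge s t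

/-- The number of directed paths of length `n` in `A` avoiding the state `e`. -/
noncomputable def pathCount (e : A.S) (n : ℕ) : ℕ :=
  Nat.card {px : (Fin (n + 1) → A.S) × (Fin n → X) //
    (∀ i, px.1 i ≠ e) ∧ ∀ i : Fin n, A.trans (px.1 i.castSucc) (px.2 i) = px.1 i.succ}

end Automaton

namespace StmtAux

open List Relation

/-- Extract a nodup chain from a refl-trans-gen witness. -/
theorem exists_nodup_chain {α : Type*} {r : α → α → Prop} {a b : α}
    (h : Relation.ReflTransGen r a b) :
    ∃ l : List α, l ≠ [] ∧ l.head? = some a ∧ l.getLast? = some b ∧ l.Nodup ∧ l.Chain' r := by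
  induction h using Relation.ReflTransGen.head_induction_on with
  | refl => exact ⟨[b], by simp, by simp, by simp, by simp, List.isChain_singleton _⟩
  | head h' _ ih =>
    rename_i a c hcb
    obtain ⟨l, hne, hhead, hlast, hnodup, hchain⟩ := ih
    by_cases hmem : a ∈ l
    · obtain ⟨l₁, l₂, rfl⟩ := List.append_of_mem hmem
      refine ⟨a :: l₂, by simp, by simp, ?_, ?_, ?_⟩
      · cases hv : (a :: l₂).getLast? with
        | none => simp at hv
        | some v =>
          rw [List.getLast?_append, hv] at hlast
          simpa using hlast
      · exact (List.Nodup.sublist (List.sublist_append_right _ _) hnodup)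
      · exact (List.isChain_append.mp hchain).2.1
    · refine ⟨a :: l, by simp, by simp, ?_, by simp [hnodup, hmem], ?_⟩
      · rw [show a :: l = [a] ++ l by simp, List.getLast?_append, hlast]
        simp
      · refine List.isChain_cons.mpr ?_
        refine ⟨?_, hchain⟩
        intro y hy
        rw [hhead] at hy
        cases hy
        exact h'
end StmtAux

namespace StmtAux

theorem chain'_reach_last {α : Type*} {R : α → α → Prop} :
    ∀ {l : List α}, l.Chain' R → ∀ {a : α}, a ∈ l → ∀ hne : l ≠ [],
      Relation.ReflTransGen R a (l.getLast hne) := by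
  intro l
  induction l with
  | nil => intro _ a ha; simp at ha
  | cons b l ih =>
    intro hch a ha hne
    rcases List.mem_cons.mp ha with rfl | ha
    · cases l with
      | nil => exact Relation.ReflTransGen.refl
      | cons c t =>
        have h1 : R a c := (List.isChain_cons_cons.mp hch).1
        have h2 := ih (List.isChain_cons_cons.mp hch).2 (List.mem_cons_self) (by simp)
        rw [List.getLast_cons (by simp)]
        exact Relation.ReflTransGen.head h1 h2
    · have hl : l ≠ [] := List.ne_nil_of_mem ha
      rw [List.getLast_cons hl]
      exact ih (List.IsChain.tail hch) ha hl

theorem chain'_head_reach {α : Type*} {R : α → α → Prop} :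
    ∀ {l : List α}, l.Chain' R → ∀ {a : α}, a ∈ l → ∀ hne : l ≠ [],
      Relation.ReflTransGen R (l.head hne) a := by
  intro l
  induction l with
  | nil => intro _ a ha; simp at ha
  | cons b l ih =>
    intro hch a ha hne
    rcases List.mem_cons.mp ha with rfl | ha
    · exact Relation.ReflTransGen.refl
    · have hl : l ≠ [] := List.ne_nil_of_mem ha
      have h1 : R b (l.head hl) := (List.isChain_cons.mp hch).1 _ (List.head?_eq_head hl ▸ rfl)
      exact Relation.ReflTransGen.head h1 (ih (List.IsChain.tail hch) ha hl)

theorem chain'_next {α : Type*} {R : α → α → Prop} :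
    ∀ {l : List α}, l.Chain' R → ∀ hne : l ≠ [], ∀ {a : α}, a ∈ l →
      a = l.getLast hne ∨ ∃ b ∈ l, R a b := by
  intro l
  induction l with
  | nil => intro _ h; simp at h
  | cons c l ih =>
    intro hch hne a ha
    rcases List.mem_cons.mp ha with rfl | ha
    · cases l with
      | nil => left; simp
      | cons d t =>
        right
        exact ⟨d, by simp, (List.isChain_cons_cons.mp hch).1⟩
    · have hl : l ≠ [] := List.ne_nil_of_mem ha
      rcases ih (List.IsChain.tail hch) hl ha with h | ⟨b, hb, hab⟩
      · left; rw [List.getLast_cons hl]; exact h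
      · right; exact ⟨b, List.mem_cons_of_mem _ hb, hab⟩

theorem chain'_all {α : Type*} {R : α → α → Prop} {P : α → Prop}
    (hR : ∀ a b, R a b → P b) :
    ∀ {l : List α}, l.Chain' R → (∀ hne : l ≠ [], P (l.head hne)) → ∀ a ∈ l, P a := by
  intro l
  induction l with
  | nil => intro _ _ a ha; simp at ha
  | cons b l ih =>
    intro hch hhead a ha
    rcases List.mem_cons.mp ha with rfl | ha
    · exact hhead (by simp)
    · have hl : l ≠ [] := List.ne_nil_of_mem ha
      refine ih (List.IsChain.tail hch) (fun hne => ?_) a ha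
      exact hR b _ ((List.isChain_cons.mp hch).1 _ (List.head?_eq_head hne ▸ rfl))

end StmtAux

namespace StmtAux

variable {X : Type*} (A : Automaton X) (e : A.S)

/-- Edge avoiding `e` at the target. -/
def NE (a b : A.S) : Prop := A.Edge a b ∧ b ≠ e

theorem rt_fst {p q : A.S × X}
    (h : Relation.ReflTransGen (fun p q : A.S × X => A.trans p.1 p.2 = q.1) p q) :
    Relation.ReflTransGen A.Edge p.1 q.1 :=
  Relation.ReflTransGen.lift Prod.fst (fun a b hab => (⟨a.2, hab⟩ : A.Edge a.1 b.1)) _ _ h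

theorem cycle_reach {c : List (A.S × X)} (hC : A.IsCycle c) {v w : A.S}
    (hv : v ∈ c.map Prod.fst) (hw : w ∈ c.map Prod.fst) :
    Relation.ReflTransGen A.Edge v w := by
  obtain ⟨hne, hnd, hch, hwrap⟩ := hC
  obtain ⟨p, hp, rfl⟩ := List.mem_map.mp hv
  obtain ⟨q, hq, rfl⟩ := List.mem_map.mp hw
  have h1 : Relation.ReflTransGen A.Edge p.1 (c.getLast hne).1 :=
    rt_fst A (chain'_reach_last hch hp hne)
  have h2 : A.Edge (c.getLast hne).1 (c.head hne).1 := ⟨(c.getLast hne).2, hwrap hne⟩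
  have h3 : Relation.ReflTransGen A.Edge (c.head hne).1 q.1 :=
    rt_fst A (chain'_head_reach hch hq hne)
  exact (h1.tail h2).trans h3

theorem cycle_next_mem {c : List (A.S × X)} (hC : A.IsCycle c) {s : A.S} {x : X}
    (hp : (s, x) ∈ c) : A.trans s x ∈ c.map Prod.fst := by
  obtain ⟨hne, hnd, hch, hwrap⟩ := hC
  rcases chain'_next hch hne hp with h | ⟨b, hb, hab⟩
  · have := hwrap hne
    rw [← h] at this
    exact this ▸ List.mem_map_of_mem (f := Prod.fst) (List.head_mem hne)
  · exact hab ▸ List.mem_map_of_mem (f := Prod.fst) hb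

/-- Any walk to a state `≠ e` is automatically an `e`-avoiding walk. -/
theorem walk_ne (he_trans : ∀ x, A.trans e x = e) {a b : A.S} (h : Relation.ReflTransGen A.Edge a b)
    (hb : b ≠ e) : Relation.ReflTransGen (NE A e) a b := by
  induction h with
  | refl => exact Relation.ReflTransGen.refl
  | tail h₁ h₂ ih =>
    rename_i c d
    have hc : c ≠ e := by
      rintro rfl
      obtain ⟨x, hx⟩ := h₂
      exact hb (by rw [← hx, he_trans])
    exact (ih hc).tail ⟨h₂, hb⟩

open scoped Classical in
noncomputable def pick (x : X) (a b : A.S) : X :=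
  if h : ∃ y, A.trans a y = b then h.choose else x

theorem pick_spec (x : X) {a b : A.S} (h : A.Edge a b) : A.trans a (pick A x a b) = b := by
  have h' : ∃ y, A.trans a y = b := h
  unfold pick
  rw [dif_pos h']
  exact h'.choose_spec

noncomputable def mkP (x : X) : List A.S → List (A.S × X)
  | [] => []
  | [_] => []
  | a :: b :: t => (a, pick A x a b) :: mkP x (b :: t)

theorem mkP_map_fst (x : X) : ∀ l : List A.S, (mkP A x l).map Prod.fst = l.dropLast := by
  intro l
  induction l with
  | nil => simp [mkP]
  | cons a t ih =>
    cases t with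
    | nil => simp [mkP]
    | cons b t2 => simpa [mkP] using ih

theorem mkP_chain' (x : X) : ∀ l : List A.S, l.Chain' A.Edge →
    (mkP A x l).Chain' (fun p q => A.trans p.1 p.2 = q.1) := by
  intro l
  induction l with
  | nil => intro _; exact List.isChain_nil
  | cons a t ih =>
    cases t with
    | nil => intro _; exact List.isChain_nil
    | cons b t2 =>
      intro hch
      have h1 : A.Edge a b := (List.isChain_cons_cons.mp hch).1
      have h2 := ih (List.isChain_cons_cons.mp hch).2
      rw [mkP]; refine List.isChain_cons.mpr ?_
      refine ⟨?_, h2⟩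
      intro q hq
      cases t2 with
      | nil => simp [mkP] at hq
      | cons c t3 =>
        rw [mkP] at hq
        simp at hq
        rw [hq.symm]
        exact pick_spec A x h1

theorem mkP_getLast (x : X) : ∀ (t : List A.S) (a b : A.S),
    (a :: b :: t).Chain' A.Edge →
    ∃ p : A.S × X, (mkP A x (a :: b :: t)).getLast? = some p ∧
      (a :: b :: t).getLast? = some (A.trans p.1 p.2) := by
  intro t
  induction t with
  | nil =>
    intro a b hch
    have h1 : A.Edge a b := (List.isChain_cons_cons.mp hch).1
    exact ⟨(a, pick A x a b), by simp [mkP], by simp [pick_spec A x h1]⟩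
  | cons c t3 ih =>
    intro a b hch
    obtain ⟨p, hp1, hp2⟩ := ih b c (List.isChain_cons_cons.mp hch).2
    refine ⟨p, ?_, ?_⟩
    · rw [show mkP A x (a :: b :: c :: t3) = [(a, pick A x a b)] ++ mkP A x (b :: c :: t3)
        from rfl, List.getLast?_append, hp1]
      simp
    · rw [show (a :: b :: c :: t3) = [a] ++ (b :: c :: t3) from rfl, List.getLast?_append, hp2]
      simp

end StmtAux

namespace StmtAux

variable {X : Type*} (A : Automaton X) (e : A.S)

/-- Closing up an `e`-avoiding walk `u ⇝ s` with an edge `s →ₓ u` produces a simple cycle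
through `(s, x)` avoiding `e`. -/
theorem exists_cycle_of_walk {s u : A.S} {x : X} (hsx : A.trans s x = u) (hs : s ≠ e)
    (hu : u ≠ e) (hw : Relation.ReflTransGen (NE A e) u s) :
    ∃ D : List (A.S × X), A.IsCycle D ∧ e ∉ D.map Prod.fst ∧ (s, x) ∈ D := by
  obtain ⟨l, hne, hhead, hlast, hnodup, hchain⟩ := exists_nodup_chain hw
  have hchE : l.Chain' A.Edge := hchain.imp (fun a b h => h.1)
  have hallne : ∀ a ∈ l, a ≠ e := by
    refine chain'_all (fun a b h => h.2) hchain (fun hne' => ?_)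
    have h1 : l.head hne' = u := by
      have h2 := List.head?_eq_head hne'
      rw [hhead] at h2
      exact (Option.some_injective _ h2).symm
    rw [h1]; exact hu
  have hgl : l.getLast hne = s := by
    have h2 := List.getLast?_eq_getLast hne
    rw [hlast] at h2
    exact (Option.some_injective _ h2).symm
  cases l with
  | nil => exact absurd rfl hne
  | cons a t =>
    have hau : a = u := by simpa using hhead
    cases t with
    | nil =>
      have hus : u = s := by rw [← hau]; simpa using hgl
      refine ⟨[(s, x)], ⟨by simp, by simp, List.isChain_singleton _, fun h => ?_⟩, ?_, by simp⟩
      · simp only [List.getLast_singleton, List.head_cons]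
        rw [hsx, hus]
      · simpa using fun h => hs h.symm
    | cons b t2 =>
      have hmne : mkP A x (a :: b :: t2) ≠ [] := by rw [mkP]; simp
      have hmapfst : (mkP A x (a :: b :: t2)).map Prod.fst = (a :: b :: t2).dropLast :=
        mkP_map_fst A x _
      obtain ⟨p, hp1, hp2⟩ := mkP_getLast A x t2 a b hchE
      have hps : A.trans p.1 p.2 = s := by
        rw [hlast] at hp2
        exact Option.some_injective _ hp2.symm
      have hsplit : (a :: b :: t2).dropLast ++ [s] = (a :: b :: t2) := by
        rw [← hgl]; exact List.dropLast_append_getLast hne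
      have hnodup2 : (s :: (a :: b :: t2).dropLast).Nodup := by
        have h3 := hnodup
        rw [← hsplit] at h3
        rcases List.nodup_append.mp h3 with ⟨h4, _, h5⟩
        refine List.nodup_cons.mpr ⟨fun hmem => ?_, h4⟩
        exact h5 _ hmem s (by simp) rfl
      refine ⟨(s, x) :: mkP A x (a :: b :: t2), ⟨by simp, ?_, ?_, fun h => ?_⟩, ?_, by simp⟩
      · simpa [hmapfst] using hnodup2
      · refine List.isChain_cons.mpr ?_
        refine ⟨?_, mkP_chain' A x _ hchE⟩
        intro q hq
        have : q = (a, pick A x a b) := by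
          rw [show mkP A x (a :: b :: t2) = (a, pick A x a b) :: mkP A x (b :: t2) from rfl]
            at hq
          simpa using hq.symm
        rw [this, hsx, hau]
      · have hgl2 : (((s, x) :: mkP A x (a :: b :: t2)).getLast h) = p := by
          have h6 : ((s, x) :: mkP A x (a :: b :: t2)).getLast? = some p := by
            rw [show (s, x) :: mkP A x (a :: b :: t2) = [(s, x)] ++ mkP A x (a :: b :: t2)
              from rfl, List.getLast?_append, hp1]
            simp
          have h7 := List.getLast?_eq_getLast h
          rw [h6] at h7
          exact (Option.some_injective _ h7).symm
        rw [hgl2, hps]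
        simp
      · intro hmem
        rw [List.map_cons, hmapfst] at hmem
        rcases List.mem_cons.mp hmem with h | h
        · exact hs h.symm
        · exact hallne e ((List.dropLast_sublist _).subset h) rfl

end StmtAux

namespace StmtAux

variable {X : Type*} (A : Automaton X) (e : A.S)

def onCyc (s : A.S) : Prop :=
  ∃ c : List (A.S × X), A.IsCycle c ∧ e ∉ c.map Prod.fst ∧ s ∈ c.map Prod.fst

def ChainFrom (u : A.S) (r : ℕ) (c : ℕ → List (A.S × X)) : Prop :=
  (∀ i < r, A.IsCycle (c i)) ∧ (∀ i < r, e ∉ (c i).map Prod.fst) ∧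
  (∀ i < r, ∀ v ∈ (c i).map Prod.fst, Relation.ReflTransGen A.Edge u v) ∧
  (∀ i < r, ∀ j < r, i ≠ j → ¬∃ n, c j = (c i).rotate n) ∧
  (∀ i, i + 1 < r → A.ConnectedTo (c i) (c (i + 1)))

noncomputable def rho (s : A.S) : ℕ := sSup {r | ∃ c, ChainFrom A e s r c}

theorem chainFrom_zero (s : A.S) : ChainFrom A e s 0 (fun _ => []) :=
  ⟨fun i hi => absurd hi (by omega), fun i hi => absurd hi (by omega),
   fun i hi => absurd hi (by omega), fun i hi => absurd hi (by omega),
   fun i hi => absurd hi (by omega)⟩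

section

variable {A} {e} {m : ℕ}
variable (hchain : ∀ (r : ℕ) (c : ℕ → List (A.S × X)),
      (∀ i < r, A.IsCycle (c i)) →
      (∀ i < r, e ∉ (c i).map Prod.fst) →
      (∀ i < r, ∀ j < r, i ≠ j → ¬∃ n : ℕ, c j = (c i).rotate n) →
      (∀ i, i + 1 < r → A.ConnectedTo (c i) (c (i + 1))) →
      r ≤ m + 1)

include hchain

theorem rho_bddAbove (s : A.S) : BddAbove {r | ∃ c, ChainFrom A e s r c} :=
  ⟨m + 1, fun r ⟨c, h⟩ => hchain r c h.1 h.2.1 h.2.2.2.1 h.2.2.2.2⟩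

theorem rho_le (s : A.S) : rho A e s ≤ m + 1 :=
  csSup_le ⟨0, ⟨fun _ => [], chainFrom_zero A e s⟩⟩
    (fun r ⟨c, h⟩ => hchain r c h.1 h.2.1 h.2.2.2.1 h.2.2.2.2)

theorem le_rho {s : A.S} {r : ℕ} {c : ℕ → List (A.S × X)} (h : ChainFrom A e s r c) :
    r ≤ rho A e s :=
  le_csSup (rho_bddAbove hchain s) ⟨c, h⟩

theorem rho_mem (s : A.S) : ∃ c, ChainFrom A e s (rho A e s) c := by
  have h := Nat.sSup_mem (s := {r | ∃ c, ChainFrom A e s r c})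
    ⟨0, ⟨fun _ => [], chainFrom_zero A e s⟩⟩ (rho_bddAbove hchain s)
  exact h

theorem rho_mono {s t : A.S} (h : Relation.ReflTransGen A.Edge s t) :
    rho A e t ≤ rho A e s := by
  refine csSup_le ⟨0, ⟨fun _ => [], chainFrom_zero A e t⟩⟩ ?_
  rintro r ⟨c, hc⟩
  exact le_rho hchain
    ⟨hc.1, hc.2.1, fun i hi v hv => h.trans (hc.2.2.1 i hi v hv), hc.2.2.2.1, hc.2.2.2.2⟩

theorem onCyc_rho_pos {s : A.S} (h : onCyc A e s) : 1 ≤ rho A e s := by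
  obtain ⟨C, hC, heC, hs⟩ := h
  refine le_rho hchain (c := fun _ => C) ⟨fun i _ => hC, fun i _ => heC,
    fun i _ v hv => cycle_reach A hC hs hv, fun i hi j hj hij => by omega,
    fun i hi => by omega⟩

theorem not_onCyc_of_rho_zero {s : A.S} (h : rho A e s = 0) : ¬ onCyc A e s :=
  fun hc => by have := onCyc_rho_pos hchain hc; omega

end

theorem not_reach_back
    (he_trans : ∀ x, A.trans e x = e)
    (hdisj : ∀ c₁ c₂ : List (A.S × X), A.IsCycle c₁ → A.IsCycle c₂ →
      e ∉ c₁.map Prod.fst → e ∉ c₂.map Prod.fst →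
      (∃ s, s ∈ c₁.map Prod.fst ∧ s ∈ c₂.map Prod.fst) →
      ∃ n : ℕ, c₂ = c₁.rotate n)
    {C : List (A.S × X)} (hC : A.IsCycle C) (heC : e ∉ C.map Prod.fst)
    {s : A.S} {x : X} (hs : s ∈ C.map Prod.fst) (hx : (s, x) ∉ C)
    (hue : A.trans s x ≠ e) {v : A.S} (hv : v ∈ C.map Prod.fst)
    (hr : Relation.ReflTransGen A.Edge (A.trans s x) v) : False := by
  have hse : s ≠ e := fun h => heC (h ▸ hs)
  have hwalk : Relation.ReflTransGen A.Edge (A.trans s x) s := hr.trans (cycle_reach A hC hv hs)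
  have hne : Relation.ReflTransGen (NE A e) (A.trans s x) s := walk_ne A e he_trans hwalk hse
  obtain ⟨D, hD, heD, hmemD⟩ := exists_cycle_of_walk A e rfl hse hue hne
  obtain ⟨k, hk⟩ := hdisj C D hC hD heC heD ⟨s, hs, List.mem_map_of_mem (f := Prod.fst) hmemD⟩
  rw [hk] at hmemD
  exact hx (List.mem_rotate.mp hmemD)

end StmtAux

namespace StmtAux

variable {X : Type*} {A : Automaton X} {e : A.S} {m : ℕ}

section

variable (he_trans : ∀ x, A.trans e x = e)
variable (hdisj : ∀ c₁ c₂ : List (A.S × X), A.IsCycle c₁ → A.IsCycle c₂ →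
      e ∉ c₁.map Prod.fst → e ∉ c₂.map Prod.fst →
      (∃ s, s ∈ c₁.map Prod.fst ∧ s ∈ c₂.map Prod.fst) →
      ∃ n : ℕ, c₂ = c₁.rotate n)
variable (hchain : ∀ (r : ℕ) (c : ℕ → List (A.S × X)),
      (∀ i < r, A.IsCycle (c i)) →
      (∀ i < r, e ∉ (c i).map Prod.fst) →
      (∀ i < r, ∀ j < r, i ≠ j → ¬∃ n : ℕ, c j = (c i).rotate n) →
      (∀ i, i + 1 < r → A.ConnectedTo (c i) (c (i + 1))) →
      r ≤ m + 1)

include he_trans hdisj hchain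

theorem rho_deviant {C : List (A.S × X)} (hC : A.IsCycle C) (heC : e ∉ C.map Prod.fst)
    {s : A.S} {x : X} (hs : s ∈ C.map Prod.fst) (hx : (s, x) ∉ C)
    (hue : A.trans s x ≠ e) : rho A e (A.trans s x) + 1 ≤ rho A e s := by
  obtain ⟨c, hc⟩ := rho_mem hchain (A.trans s x)
  set u := A.trans s x with hu
  set r := rho A e u with hr
  have hsu : Relation.ReflTransGen A.Edge s u := Relation.ReflTransGen.single ⟨x, rfl⟩
  refine le_rho hchain (c := fun i => match i with | 0 => C | j+1 => c j)
    ⟨?_, ?_, ?_, ?_, ?_⟩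
  · rintro (_ | j) hi
    · exact hC
    · exact hc.1 j (by omega)
  · rintro (_ | j) hi
    · exact heC
    · exact hc.2.1 j (by omega)
  · rintro (_ | j) hi v hv
    · exact cycle_reach A hC hs hv
    · exact hsu.trans (hc.2.2.1 j (by omega) v hv)
  · rintro (_ | i) hi (_ | j) hj hij
    · exact absurd rfl hij
    · rintro ⟨k, hk⟩
      have hk' : c j = C.rotate k := hk
      obtain ⟨p, hp⟩ := List.exists_mem_of_ne_nil (c j) (hc.1 j (by omega)).1
      have hpC : p ∈ C := List.mem_rotate.mp (hk' ▸ hp)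
      exact not_reach_back A e he_trans hdisj hC heC hs hx hue
        (List.mem_map_of_mem (f := Prod.fst) hpC) (hc.2.2.1 j (by omega) p.1 (List.mem_map_of_mem hp))
    · rintro ⟨k, hk⟩
      have hk' : C = (c i).rotate k := hk
      obtain ⟨p, hp⟩ := List.exists_mem_of_ne_nil C hC.1
      have hpc : p ∈ c i := List.mem_rotate.mp (hk' ▸ hp)
      exact not_reach_back A e he_trans hdisj hC heC hs hx hue
        (List.mem_map_of_mem (f := Prod.fst) hp) (hc.2.2.1 i (by omega) p.1 (List.mem_map_of_mem hpc))
    · exact hc.2.2.2.1 i (by omega) j (by omega) (by omega)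
  · rintro (_ | i) hi
    · obtain ⟨p, hp⟩ := List.exists_mem_of_ne_nil (c 0) (hc.1 0 (by omega)).1
      exact ⟨s, p.1, hs, List.mem_map_of_mem (f := Prod.fst) hp,
        hsu.trans (hc.2.2.1 0 (by omega) p.1 (List.mem_map_of_mem hp))⟩
    · exact hc.2.2.2.2 i (by omega)

end

open scoped Classical in
noncomputable def dd (A : Automaton X) (e : A.S) (s : A.S) : ℕ :=
  if onCyc A e s then 0
  else {t | Relation.ReflTransGen (fun a b => A.Edge a b ∧ ¬ onCyc A e b ∧ b ≠ e) s t}.ncard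

theorem dd_le_card (s : A.S) : dd A e s ≤ Fintype.card A.S := by
  unfold dd
  split
  · omega
  · refine le_trans (Set.ncard_le_ncard (Set.subset_univ _) (Set.toFinite _)) ?_
    rw [Set.ncard_univ, Nat.card_eq_fintype_card]

theorem dd_pos {s : A.S} (h : ¬ onCyc A e s) : 1 ≤ dd A e s := by
  unfold dd
  rw [if_neg h]
  exact (Set.ncard_pos (Set.toFinite _)).mpr ⟨s, Relation.ReflTransGen.refl⟩

theorem dd_cyc {s : A.S} (h : onCyc A e s) : dd A e s = 0 := by
  unfold dd
  rw [if_pos h]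

theorem dd_lt {s : A.S} (hs : ¬ onCyc A e s) (hse : s ≠ e) {x : X}
    (hue : A.trans s x ≠ e) (hu : ¬ onCyc A e (A.trans s x)) :
    dd A e (A.trans s x) < dd A e s := by
  unfold dd
  rw [if_neg hs, if_neg hu]
  refine Set.ncard_lt_ncard ⟨?_, ?_⟩ (Set.toFinite _)
  · intro t ht
    exact Relation.ReflTransGen.head ⟨⟨x, rfl⟩, hu, hue⟩ ht
  · intro hsub
    have hmem : s ∈ {t | Relation.ReflTransGen
        (fun a b => A.Edge a b ∧ ¬ onCyc A e b ∧ b ≠ e) (A.trans s x) t} :=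
      hsub Relation.ReflTransGen.refl
    have hwalk : Relation.ReflTransGen (NE A e) (A.trans s x) s :=
      Relation.ReflTransGen.mono (fun a b h => (⟨h.1, h.2.2⟩ : NE A e a b)) _ _ hmem
    obtain ⟨D, hD, heD, hmemD⟩ := exists_cycle_of_walk A e rfl hse hue hwalk
    exact hs ⟨D, hD, heD, List.mem_map_of_mem (f := Prod.fst) hmemD⟩

end StmtAux

namespace StmtAux

variable {X : Type*}

/-- `M`, the branching constant. -/
def MM (X : Type*) [Fintype X] : ℕ := Fintype.card X + 1

section FF

variable [Fintype X]

open scoped Classical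

open scoped Classical in
noncomputable def ff (A : Automaton X) (e : A.S) : ℕ → A.S → ℕ
  | 0, _ => 1
  | n + 1, s => ∑ x : X, if A.trans s x = e then 0 else ff A e n (A.trans s x)

def BB (A : Automaton X) : ℕ := MM X ^ (Fintype.card A.S + 1)

open scoped Classical in
noncomputable def Phi (A : Automaton X) (e : A.S) (s : A.S) (n : ℕ) : ℕ :=
  if rho A e s = 0 then (if n ≤ dd A e s then MM X ^ dd A e s else 0)
  else MM X ^ dd A e s * BB A ^ rho A e s * (n + 1) ^ (rho A e s - 1)

variable {A : Automaton X} {e : A.S}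

theorem MM_pos : 1 ≤ MM X := by unfold MM; omega

theorem ff_le_pow : ∀ n : ℕ, ∀ s : A.S, ff A e n s ≤ MM X ^ n := by
  intro n
  induction n with
  | zero => intro s; simp [ff]
  | succ n ih =>
    intro s
    rw [ff]
    calc (∑ x : X, if A.trans s x = e then 0 else ff A e n (A.trans s x))
        ≤ ∑ _x : X, MM X ^ n := by
          refine Finset.sum_le_sum (fun x _ => ?_)
          split
          · exact Nat.zero_le _
          · exact ih _
      _ = Fintype.card X * MM X ^ n := by
          rw [Finset.sum_const, Finset.card_univ, smul_eq_mul]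
      _ ≤ MM X ^ (n + 1) := by
          rw [pow_succ, mul_comm]
          exact Nat.mul_le_mul_left _ (by unfold MM; omega)

theorem BB_pos : 1 ≤ BB A := Nat.one_le_pow _ _ (by unfold MM; omega)

theorem Phi_le_gen {s : A.S} {n q δ : ℕ} (h1 : rho A e s ≤ q) (h2 : dd A e s ≤ δ) :
    Phi A e s n ≤ MM X ^ δ * BB A ^ q * (n + 1) ^ (q - 1) := by
  unfold Phi
  split
  · have hb : 0 < BB A ^ q * (n + 1) ^ (q - 1) :=
      Nat.mul_pos (pow_pos (by unfold BB MM; positivity) _) (pow_pos (by omega) _)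
    calc (if n ≤ dd A e s then MM X ^ dd A e s else 0)
        ≤ MM X ^ dd A e s := by split <;> omega
      _ ≤ MM X ^ δ := Nat.pow_le_pow_right MM_pos h2
      _ ≤ MM X ^ δ * (BB A ^ q * (n + 1) ^ (q - 1)) := Nat.le_mul_of_pos_right _ (by omega)
      _ = MM X ^ δ * BB A ^ q * (n + 1) ^ (q - 1) := by ring
  · refine Nat.mul_le_mul (Nat.mul_le_mul ?_ ?_) ?_
    · exact Nat.pow_le_pow_right MM_pos h2
    · exact Nat.pow_le_pow_right BB_pos h1
    · exact Nat.pow_le_pow_right (by omega) (Nat.sub_le_sub_right h1 1)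

theorem Phi_pos {s : A.S} : 1 ≤ Phi A e s 0 := by
  unfold Phi
  split
  · rw [if_pos (Nat.zero_le _)]
    exact Nat.one_le_pow _ _ (by unfold MM; omega)
  · have h1 : 0 < MM X ^ dd A e s := pow_pos (by unfold MM; omega) _
    have h2 : 0 < BB A ^ rho A e s := pow_pos (by unfold BB MM; positivity) _
    have h3 : 0 < (0 + 1 : ℕ) ^ (rho A e s - 1) := pow_pos (by omega) _
    exact Nat.mul_pos (Nat.mul_pos h1 h2) h3

end FF

theorem pow_plus {a : ℕ} : ∀ q : ℕ, (a + 1) ^ (q + 1) + (a + 1) ^ q ≤ (a + 2) ^ (q + 1) := by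
  intro q
  induction q with
  | zero =>
    have h1 : (a + 1) ^ (0 + 1) + (a + 1) ^ 0 = a + 2 := by ring
    have h2 : (a + 2) ^ (0 + 1) = a + 2 := by ring
    omega
  | succ q ih =>
    have h1 : (a + 1) ^ (q + 1 + 1) + (a + 1) ^ (q + 1)
        = (a + 1) * ((a + 1) ^ (q + 1) + (a + 1) ^ q) := by ring
    calc (a + 1) ^ (q + 1 + 1) + (a + 1) ^ (q + 1)
        = (a + 1) * ((a + 1) ^ (q + 1) + (a + 1) ^ q) := h1
      _ ≤ (a + 2) * (a + 2) ^ (q + 1) := Nat.mul_le_mul (by omega) ih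
      _ = (a + 2) ^ (q + 1 + 1) := by ring

end StmtAux

namespace StmtAux

open scoped Classical

variable {X : Type*} [Fintype X] {A : Automaton X} {e : A.S} {m : ℕ}

section Master

variable (he_trans : ∀ x, A.trans e x = e)
variable (hdisj : ∀ c₁ c₂ : List (A.S × X), A.IsCycle c₁ → A.IsCycle c₂ →
      e ∉ c₁.map Prod.fst → e ∉ c₂.map Prod.fst →
      (∃ s, s ∈ c₁.map Prod.fst ∧ s ∈ c₂.map Prod.fst) →
      ∃ n : ℕ, c₂ = c₁.rotate n)
variable (hchain : ∀ (r : ℕ) (c : ℕ → List (A.S × X)),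
      (∀ i < r, A.IsCycle (c i)) →
      (∀ i < r, e ∉ (c i).map Prod.fst) →
      (∀ i < r, ∀ j < r, i ≠ j → ¬∃ n : ℕ, c j = (c i).rotate n) →
      (∀ i, i + 1 < r → A.ConnectedTo (c i) (c (i + 1))) →
      r ≤ m + 1)

include he_trans hdisj hchain

theorem ff_le_Phi : ∀ (n : ℕ) (s : A.S), s ≠ e → ff A e n s ≤ Phi A e s n := by
  intro n
  induction n with
  | zero =>
    intro s _
    simpa [ff] using (Phi_pos (A := A) (e := e) (s := s))
  | succ n ih =>
    intro s hs
    by_cases hoc : onCyc A e s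
    · -- s lies on a cycle
      obtain ⟨C, hC, heC, hsC⟩ := hoc
      obtain ⟨p, hpC, hfst⟩ := List.mem_map.mp hsC
      have hpair : (s, p.2) ∈ C := by rw [← hfst, Prod.mk.eta]; exact hpC
      have hocs : onCyc A e s := ⟨C, hC, heC, hsC⟩
      have htC : A.trans s p.2 ∈ C.map Prod.fst := cycle_next_mem A hC hpair
      have hte : A.trans s p.2 ≠ e := fun h => heC (h ▸ htC)
      have hoct : onCyc A e (A.trans s p.2) := ⟨C, hC, heC, htC⟩
      have hrts : rho A e (A.trans s p.2) = rho A e s :=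
        le_antisymm (rho_mono hchain (cycle_reach A hC hsC htC))
          (rho_mono hchain (cycle_reach A hC htC hsC))
      have hrpos : 1 ≤ rho A e s := onCyc_rho_pos hchain hocs
      have hdds : dd A e s = 0 := dd_cyc hocs
      have hmain : ff A e n (A.trans s p.2)
          ≤ BB A ^ rho A e s * (n + 1) ^ (rho A e s - 1) := by
        have h1 := ih (A.trans s p.2) hte
        have h2 := Phi_le_gen (n := n) (le_of_eq hrts) (le_of_eq (dd_cyc hoct))
        simpa using h1.trans h2
      have hdev : ∀ x : X, x ≠ p.2 → A.trans s x ≠ e →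
          rho A e (A.trans s x) + 1 ≤ rho A e s := by
        intro x hx hne
        refine rho_deviant he_trans hdisj hchain hC heC hsC ?_ hne
        intro hmem
        exact hx (congrArg Prod.snd (List.inj_on_of_nodup_map hC.2.1 hmem hpair rfl))
      have hsum : ff A e (n+1) s
          = (if A.trans s p.2 = e then 0 else ff A e n (A.trans s p.2))
            + ∑ x ∈ Finset.univ.erase p.2,
                (if A.trans s x = e then 0 else ff A e n (A.trans s x)) := by
        rw [ff, ← Finset.add_sum_erase Finset.univ _ (Finset.mem_univ p.2)]
      by_cases hcrude : rho A e s = 1 ∧ n ≤ Fintype.card A.S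
      · obtain ⟨hr1, hn⟩ := hcrude
        have hPhi : Phi A e s (n+1) = BB A := by
          unfold Phi
          rw [if_neg (by omega), hdds, hr1]
          simp
        rw [hPhi]
        calc ff A e (n+1) s ≤ MM X ^ (n+1) := ff_le_pow _ _
          _ ≤ MM X ^ (Fintype.card A.S + 1) := Nat.pow_le_pow_right MM_pos (by omega)
          _ = BB A := rfl
      · rw [hsum, if_neg hte]
        by_cases hr1 : rho A e s = 1
        · -- rho = 1, n large: deviant terms vanish
          have hn : Fintype.card A.S < n := by
            rcases Nat.lt_or_ge (Fintype.card A.S) n with h | h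
            · exact h
            · exact absurd ⟨hr1, h⟩ hcrude
          have hz : ∀ x ∈ Finset.univ.erase p.2,
              (if A.trans s x = e then 0 else ff A e n (A.trans s x)) = 0 := by
            intro x hx
            split
            · rfl
            · rename_i hne
              have hdx := hdev x (Finset.ne_of_mem_erase hx) hne
              have hr0 : rho A e (A.trans s x) = 0 := by omega
              have h1 := ih (A.trans s x) hne
              have hdd := dd_le_card (A := A) (e := e) (s := A.trans s x)
              unfold Phi at h1
              rw [if_pos hr0, if_neg (by omega)] at h1
              omega
          rw [Finset.sum_eq_zero hz]
          have hPhi : Phi A e s (n+1) = BB A := by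
            unfold Phi
            rw [if_neg (by omega), hdds, hr1]
            simp
          have hPt : Phi A e (A.trans s p.2) n = BB A := by
            unfold Phi
            rw [if_neg (by omega), dd_cyc hoct, hrts, hr1]
            simp
          have h1 := ih (A.trans s p.2) hte
          rw [hPt] at h1
          rw [hPhi]
          omega
        · -- rho ≥ 2
          have hr2 : 2 ≤ rho A e s := by omega
          have hdevb : ∀ x ∈ Finset.univ.erase p.2,
              (if A.trans s x = e then 0 else ff A e n (A.trans s x))
                ≤ MM X ^ Fintype.card A.S * BB A ^ (rho A e s - 1)
                  * (n+1) ^ (rho A e s - 1 - 1) := by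
            intro x hx
            split
            · exact Nat.zero_le _
            · rename_i hne
              have hdx := hdev x (Finset.ne_of_mem_erase hx) hne
              exact (ih _ hne).trans (Phi_le_gen (by omega) (dd_le_card _))
          have hsumb : (∑ x ∈ Finset.univ.erase p.2,
              (if A.trans s x = e then 0 else ff A e n (A.trans s x)))
                ≤ BB A ^ (rho A e s - 1 + 1) * (n+1) ^ (rho A e s - 1 - 1) := by
            calc (∑ x ∈ Finset.univ.erase p.2,
                (if A.trans s x = e then 0 else ff A e n (A.trans s x)))
                ≤ ∑ _x ∈ Finset.univ.erase p.2, MM X ^ Fintype.card A.S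
                    * BB A ^ (rho A e s - 1) * (n+1) ^ (rho A e s - 1 - 1) :=
                  Finset.sum_le_sum hdevb
              _ = (Finset.univ.erase p.2).card • (MM X ^ Fintype.card A.S
                    * BB A ^ (rho A e s - 1) * (n+1) ^ (rho A e s - 1 - 1)) :=
                  Finset.sum_const _
              _ ≤ MM X * (MM X ^ Fintype.card A.S * BB A ^ (rho A e s - 1)
                    * (n+1) ^ (rho A e s - 1 - 1)) := by
                  rw [smul_eq_mul]
                  refine Nat.mul_le_mul_right _ ?_
                  have := Finset.card_erase_le (a := p.2) (s := (Finset.univ : Finset X))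
                  have h2 : (Finset.univ : Finset X).card = Fintype.card X :=
                    Finset.card_univ
                  unfold MM
                  omega
              _ = (MM X ^ (Fintype.card A.S + 1)) * BB A ^ (rho A e s - 1)
                    * (n+1) ^ (rho A e s - 1 - 1) := by ring
              _ = BB A ^ (rho A e s - 1 + 1) * (n+1) ^ (rho A e s - 1 - 1) := by
                  rw [pow_succ]
                  show BB A * _ * _ = _
                  ring
          have hPhi : Phi A e s (n+1) = BB A ^ rho A e s * (n+2) ^ (rho A e s - 1) := by
            unfold Phi
            rw [if_neg (by omega), hdds]
            norm_num
          rw [hPhi]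
          have hq : rho A e s - 1 = (rho A e s - 2) + 1 := by omega
          have hfin : (n+1) ^ (rho A e s - 1) + (n+1) ^ (rho A e s - 1 - 1)
              ≤ (n+2) ^ (rho A e s - 1) := by
            rw [hq]
            have h3 : rho A e s - 2 + 1 - 1 = rho A e s - 2 := by omega
            rw [h3]
            exact pow_plus _
          have hr1' : rho A e s - 1 + 1 = rho A e s := by omega
          rw [hr1'] at hsumb
          calc ff A e n (A.trans s p.2) + _
              ≤ (BB A ^ rho A e s * (n + 1) ^ (rho A e s - 1))
                + BB A ^ rho A e s * (n+1) ^ (rho A e s - 1 - 1) :=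
                Nat.add_le_add hmain hsumb
            _ = BB A ^ rho A e s * ((n + 1) ^ (rho A e s - 1)
                + (n+1) ^ (rho A e s - 1 - 1)) := by ring
            _ ≤ BB A ^ rho A e s * (n+2) ^ (rho A e s - 1) :=
                Nat.mul_le_mul_left _ hfin
    · -- s not on a cycle
      have hdd1 : 1 ≤ dd A e s := dd_pos hoc
      rw [ff]
      by_cases hr0 : rho A e s = 0
      · have hterm : ∀ x : X, (if A.trans s x = e then 0 else ff A e n (A.trans s x))
            ≤ (if n + 1 ≤ dd A e s then MM X ^ (dd A e s - 1) else 0) := by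
          intro x
          split
          · exact Nat.zero_le _
          · rename_i hne
            have hru : rho A e (A.trans s x) = 0 := by
              have := rho_mono hchain
                (Relation.ReflTransGen.single (⟨x, rfl⟩ : A.Edge s (A.trans s x)))
              omega
            have hnoc : ¬ onCyc A e (A.trans s x) := not_onCyc_of_rho_zero hchain hru
            have hdu : dd A e (A.trans s x) < dd A e s := dd_lt hoc hs hne hnoc
            have h1 := ih (A.trans s x) hne
            unfold Phi at h1
            rw [if_pos hru] at h1
            by_cases h2 : n ≤ dd A e (A.trans s x)
            · rw [if_pos h2] at h1
              rw [if_pos (by omega)]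
              exact h1.trans (Nat.pow_le_pow_right MM_pos (by omega))
            · rw [if_neg h2] at h1
              exact le_trans h1 (Nat.zero_le _)
        have hPhi : Phi A e s (n+1) = if n + 1 ≤ dd A e s then MM X ^ dd A e s else 0 := by
          unfold Phi
          rw [if_pos hr0]
        rw [hPhi]
        calc (∑ x : X, if A.trans s x = e then 0 else ff A e n (A.trans s x))
            ≤ ∑ _x : X, (if n + 1 ≤ dd A e s then MM X ^ (dd A e s - 1) else 0) :=
              Finset.sum_le_sum (fun x _ => hterm x)
          _ = Fintype.card X * (if n + 1 ≤ dd A e s then MM X ^ (dd A e s - 1) else 0) := by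
              rw [Finset.sum_const, Finset.card_univ, smul_eq_mul]
          _ ≤ if n + 1 ≤ dd A e s then MM X ^ dd A e s else 0 := by
              split
              · have h3 : MM X ^ dd A e s = MM X ^ (dd A e s - 1) * MM X := by
                  rw [← pow_succ, Nat.sub_add_cancel hdd1]
                rw [h3]
                calc Fintype.card X * MM X ^ (dd A e s - 1)
                    ≤ MM X * MM X ^ (dd A e s - 1) :=
                      Nat.mul_le_mul_right _ (by unfold MM; omega)
                  _ = MM X ^ (dd A e s - 1) * MM X := by ring
              · simp
      · have hterm : ∀ x : X, (if A.trans s x = e then 0 else ff A e n (A.trans s x))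
            ≤ MM X ^ (dd A e s - 1) * BB A ^ rho A e s * (n+1) ^ (rho A e s - 1) := by
          intro x
          split
          · exact Nat.zero_le _
          · rename_i hne
            have hru : rho A e (A.trans s x) ≤ rho A e s :=
              rho_mono hchain
                (Relation.ReflTransGen.single (⟨x, rfl⟩ : A.Edge s (A.trans s x)))
            have hδ : dd A e (A.trans s x) ≤ dd A e s - 1 := by
              by_cases hcu : onCyc A e (A.trans s x)
              · rw [dd_cyc hcu]; omega
              · have := dd_lt hoc hs hne hcu; omega
            exact (ih _ hne).trans (Phi_le_gen hru hδ)
        have hPhi : Phi A e s (n+1)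
            = MM X ^ dd A e s * BB A ^ rho A e s * (n+2) ^ (rho A e s - 1) := by
          unfold Phi
          rw [if_neg hr0]
        rw [hPhi]
        calc (∑ x : X, if A.trans s x = e then 0 else ff A e n (A.trans s x))
            ≤ ∑ _x : X, MM X ^ (dd A e s - 1) * BB A ^ rho A e s
                * (n+1) ^ (rho A e s - 1) :=
              Finset.sum_le_sum (fun x _ => hterm x)
          _ = Fintype.card X * (MM X ^ (dd A e s - 1) * BB A ^ rho A e s
                * (n+1) ^ (rho A e s - 1)) := by
              rw [Finset.sum_const, Finset.card_univ, smul_eq_mul]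
          _ ≤ MM X * (MM X ^ (dd A e s - 1) * BB A ^ rho A e s
                * (n+1) ^ (rho A e s - 1)) :=
              Nat.mul_le_mul_right _ (by unfold MM; omega)
          _ = (MM X ^ (dd A e s - 1) * MM X) * BB A ^ rho A e s
                * (n+1) ^ (rho A e s - 1) := by ring
          _ = MM X ^ dd A e s * BB A ^ rho A e s * (n+1) ^ (rho A e s - 1) := by
              rw [← pow_succ, Nat.sub_add_cancel hdd1]
          _ ≤ MM X ^ dd A e s * BB A ^ rho A e s * (n+2) ^ (rho A e s - 1) :=
              Nat.mul_le_mul_left _ (Nat.pow_le_pow_left (by omega) _)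

end Master

end StmtAux

namespace StmtAux

open scoped Classical

variable {X : Type*} [Fintype X] (A : Automaton X) (e : A.S)

def Q (t : A.S) (n : ℕ) :=
  {px : (Fin (n + 1) → A.S) × (Fin n → X) //
    px.1 0 = t ∧ (∀ i, px.1 i ≠ e) ∧
      ∀ i : Fin n, A.trans (px.1 i.castSucc) (px.2 i) = px.1 i.succ}

instance Q_finite (t : A.S) (n : ℕ) : Finite (Q A e t n) := by
  unfold Q
  infer_instance

theorem Q_empty {t : A.S} (ht : t = e) (n : ℕ) : Nat.card (Q A e t n) = 0 := by
  have : IsEmpty (Q A e t n) := ⟨fun q => q.2.2.1 0 (by rw [q.2.1, ht])⟩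
  exact Nat.card_of_isEmpty

theorem card_Q_le_ff : ∀ (n : ℕ) (t : A.S), Nat.card (Q A e t n) ≤ ff A e n t := by
  intro n
  induction n with
  | zero =>
    intro t
    have hsub : Subsingleton (Q A e t 0) := by
      constructor
      rintro ⟨pf, h1, h2, h3⟩ ⟨pg, h1', h2', h3'⟩
      refine Subtype.ext (Prod.ext ?_ ?_)
      · funext i
        have hlt := i.isLt
        have hi : i = 0 := Fin.ext (by omega)
        rw [hi, h1, h1']
      · funext i
        exact i.elim0
    simpa [ff] using Finite.card_le_one_iff_subsingleton.mpr hsub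
  | succ n ih =>
    intro t
    have hG : Nat.card (Q A e t (n + 1)) ≤ Nat.card (Σ x : X, Q A e (A.trans t x) n) := by
      refine Nat.card_le_card_of_injective
        (fun q => ⟨q.1.2 0, ⟨(fun i => q.1.1 i.succ, fun i => q.1.2 i.succ), ?_, ?_, ?_⟩⟩) ?_
      · show q.1.1 (0 : Fin (n + 1)).succ = A.trans t (q.1.2 0)
        have hstep := q.2.2.2 0
        rw [Fin.castSucc_zero, q.2.1] at hstep
        exact hstep.symm
      · intro i
        exact q.2.2.1 i.succ
      · intro i
        have hstep := q.2.2.2 i.succ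
        rw [← Fin.succ_castSucc] at hstep
        exact hstep
      · intro a b hab
        have h1 : a.1.2 0 = b.1.2 0 := congrArg Sigma.fst hab
        have h3 := congrArg (fun z : (Σ x : X, Q A e (A.trans t x) n) => z.snd.val) hab
        simp only at h3
        have hf : (fun i : Fin (n + 1) => a.1.1 i.succ) = fun i => b.1.1 i.succ :=
          congrArg Prod.fst h3
        have hg : (fun i : Fin n => a.1.2 i.succ) = fun i => b.1.2 i.succ :=
          congrArg Prod.snd h3
        refine Subtype.ext (Prod.ext ?_ ?_)
        · funext i
          induction i using Fin.cases with
          | zero => rw [a.2.1, b.2.1]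
          | succ j => exact congrFun hf j
        · funext i
          induction i using Fin.cases with
          | zero => exact h1
          | succ j => exact congrFun hg j
    have hEq : Nat.card (Σ x : X, Q A e (A.trans t x) n)
        = ∑ x : X, Nat.card (Q A e (A.trans t x) n) := by
      letI : ∀ x : X, Fintype (Q A e (A.trans t x) n) := fun x => Fintype.ofFinite _
      rw [Nat.card_eq_fintype_card, Fintype.card_sigma]
      exact Finset.sum_congr rfl (fun x _ => (Nat.card_eq_fintype_card).symm)
    calc Nat.card (Q A e t (n + 1)) ≤ ∑ x : X, Nat.card (Q A e (A.trans t x) n) :=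
          hEq ▸ hG
      _ ≤ ∑ x : X, (if A.trans t x = e then 0 else ff A e n (A.trans t x)) := by
          refine Finset.sum_le_sum (fun x _ => ?_)
          split
          · rename_i h
            rw [Q_empty A e h n]
          · exact ih _
      _ = ff A e (n + 1) t := by rw [ff]

theorem pathCount_le_sum (n : ℕ) :
    A.pathCount e n ≤ ∑ s : A.S, if s = e then 0 else ff A e n s := by
  have hinj : A.pathCount e n ≤ Nat.card (Σ s : A.S, Q A e s n) := by
    unfold Automaton.pathCount
    refine Nat.card_le_card_of_injective
      (fun p => ⟨p.1.1 0, ⟨p.1, rfl, p.2.1, p.2.2⟩⟩) ?_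
    intro a b hab
    have h3 := congrArg (fun z : (Σ s : A.S, Q A e s n) => z.snd.val) hab
    exact Subtype.ext h3
  have hEq : Nat.card (Σ s : A.S, Q A e s n) = ∑ s : A.S, Nat.card (Q A e s n) := by
    letI : ∀ s : A.S, Fintype (Q A e s n) := fun s => Fintype.ofFinite _
    rw [Nat.card_eq_fintype_card, Fintype.card_sigma]
    exact Finset.sum_congr rfl (fun s _ => (Nat.card_eq_fintype_card).symm)
  refine le_trans (hEq ▸ hinj) (Finset.sum_le_sum (fun s _ => ?_))
  split
  · rename_i h
    rw [Q_empty A e h n]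
  · exact card_Q_le_ff A e n s

end StmtAux



open StmtAux

/-- If `A` is a finite polynomial automaton of degree `≤ m` (distinct nontrivial simple
directed cycles are disjoint, and at most `m + 1` nontrivial cycles can be connected by
directed paths), then the number of directed paths of length `n` avoiding the trivial
state is bounded by a polynomial in `n` of degree `≤ m`. -/
theorem stmt8 {X : Type*} [Fintype X] (A : Automaton X) (e : A.S)
    (he_trans : ∀ x, A.trans e x = e) (he_out : ∀ x, A.out e x = x) (m : ℕ)
    (hdisj : ∀ c₁ c₂ : List (A.S × X), A.IsCycle c₁ → A.IsCycle c₂ →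
      e ∉ c₁.map Prod.fst → e ∉ c₂.map Prod.fst →
      (∃ s, s ∈ c₁.map Prod.fst ∧ s ∈ c₂.map Prod.fst) →
      ∃ n : ℕ, c₂ = c₁.rotate n)
    (hchain : ∀ (r : ℕ) (c : ℕ → List (A.S × X)),
      (∀ i < r, A.IsCycle (c i)) →
      (∀ i < r, e ∉ (c i).map Prod.fst) →
      (∀ i < r, ∀ j < r, i ≠ j → ¬∃ n : ℕ, c j = (c i).rotate n) →
      (∀ i, i + 1 < r → A.ConnectedTo (c i) (c (i + 1))) →
      r ≤ m + 1) :
    ∃ C : ℕ, ∀ n, A.pathCount e n ≤ C * (n + 1) ^ m := by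
  classical
  refine ⟨Fintype.card A.S * (MM X ^ Fintype.card A.S * BB A ^ (m + 1)), fun n => ?_⟩
  have h1 := pathCount_le_sum A e n
  have h2 : ∀ s : A.S, (if s = e then 0 else ff A e n s)
      ≤ MM X ^ Fintype.card A.S * BB A ^ (m + 1) * (n + 1) ^ m := by
    intro s
    split
    · exact Nat.zero_le _
    · rename_i hs
      have h3 := ff_le_Phi he_trans hdisj hchain n s hs
      have h4 := Phi_le_gen (A := A) (e := e) (s := s) (n := n)
        (q := m + 1) (δ := Fintype.card A.S) (rho_le hchain s) (dd_le_card s)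
      simpa using h3.trans h4
  calc A.pathCount e n ≤ ∑ s : A.S, if s = e then 0 else ff A e n s := h1
    _ ≤ ∑ _s : A.S, MM X ^ Fintype.card A.S * BB A ^ (m + 1) * (n + 1) ^ m :=
        Finset.sum_le_sum (fun s _ => h2 s)
    _ = Fintype.card A.S * (MM X ^ Fintype.card A.S * BB A ^ (m + 1) * (n + 1) ^ m) := by
        rw [Finset.sum_const, Finset.card_univ, smul_eq_mul]
    _ = Fintype.card A.S * (MM X ^ Fintype.card A.S * BB A ^ (m + 1)) * (n + 1) ^ m := by
        ring
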